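/- There exist arbitrarily large strictly convex sets A of reals such that for at least C*|A|^{1/2} values of x (for some absolute constant C > 0), the equation a_1 - a_2 = x has at least C*|A|^{1/2} solutions (a_1, a_2) with a_1, a_2 in A. -/

import Mathlib

/-- A finite set of reals is strictly convex. -/
def IsConvexFinset (A : Finset ℝ) : Prop :=
  ∃ a : ℕ → ℝ, (∀ i, i + 1 < A.card → a i < a (i + 1)) ∧
    A = (Finset.range A.card).image a ∧
    (∀ i, i + 2 < A.card → a (i + 1) - a i < a (i + 2) - a (i + 1))

namespace MRD


/-- Partial sums of block sizes `2k, 2k-1, ..., 1`. -/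
def Tk (k : ℕ) : ℕ → ℕ
  | 0 => 0
  | j + 1 => Tk k j + (2 * k - j)

/-- Position of index `t`: block index and offset within block. -/
def pos (k : ℕ) : ℕ → ℕ × ℕ
  | 0 => (0, 0)
  | t + 1 =>
    let jp := pos k t
    if jp.2 + 1 < 2 * k - jp.1 then (jp.1, jp.2 + 1) else (jp.1 + 1, 0)

lemma Tk_succ (k j : ℕ) : Tk k (j + 1) = Tk k j + (2 * k - j) := rfl

lemma Tk_strict (k : ℕ) : ∀ i j : ℕ, i < j → j ≤ 2 * k → Tk k i < Tk k j := by
  intro i j hij hj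
  induction j with
  | zero => omega
  | succ j ih =>
    have hstep : Tk k j < Tk k (j + 1) := by
      rw [Tk_succ]; omega
    rcases Nat.lt_succ_iff_lt_or_eq.mp hij with h | h
    · exact (ih h (by omega)).trans hstep
    · subst h; exact hstep

lemma Tk_closed (k : ℕ) : ∀ j : ℕ, j ≤ 2 * k → 2 * Tk k j + j * j = j * (4 * k + 1) := by
  intro j hj
  induction j with
  | zero => simp [Tk]
  | succ j ih =>
    have ih' := ih (by omega)
    rw [Tk_succ]
    zify [show j ≤ 2 * k by omega] at ih' ⊢
    linear_combination ih'

lemma Tk_total (k : ℕ) : Tk k (2 * k) = 2 * (k * k) + k := by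
  have h := Tk_closed k (2 * k) le_rfl
  have e1 : (2 * k) * (2 * k) = 4 * (k * k) := by ring
  have e2 : (2 * k) * (4 * k + 1) = 8 * (k * k) + 2 * k := by ring
  rw [e1, e2] at h
  generalize k * k = K2 at h ⊢
  omega

lemma pos_spec (k : ℕ) (hk : 1 ≤ k) : ∀ t, t < Tk k (2 * k) →
    (pos k t).1 < 2 * k ∧ (pos k t).2 < 2 * k - (pos k t).1 ∧
      t = Tk k (pos k t).1 + (pos k t).2 := by
  intro t
  induction t with
  | zero =>
    intro _
    refine ⟨by simp [pos]; omega, by simp [pos]; omega, by simp [pos, Tk]⟩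
  | succ t ih =>
    intro ht
    obtain ⟨h1, h2, h3⟩ := ih (by omega)
    set j := (pos k t).1 with hj
    set p := (pos k t).2 with hp
    have hsucc : pos k (t + 1) =
        if p + 1 < 2 * k - j then (j, p + 1) else (j + 1, 0) := by
      simp [pos, ← hj, ← hp]
    by_cases hc : p + 1 < 2 * k - j
    · rw [hsucc, if_pos hc]
      exact ⟨h1, by simpa using hc, by simp; omega⟩
    · rw [hsucc, if_neg hc]
      have hpe : p + 1 = 2 * k - j := by omega
      have ht1 : t + 1 = Tk k (j + 1) := by rw [Tk_succ]; omega
      have hne : j + 1 ≠ 2 * k := by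
        intro h; rw [h] at ht1; omega
      have hlt : j + 1 < 2 * k := by omega
      exact ⟨hlt, by simp; omega, by simp [← ht1]⟩

lemma pos_Tk (k : ℕ) (hk : 1 ≤ k) {j : ℕ} (hj : j < 2 * k) :
    pos k (Tk k j) = (j, 0) := by
  have htn : Tk k j < Tk k (2 * k) := Tk_strict k j (2 * k) hj le_rfl
  obtain ⟨h1, h2, h3⟩ := pos_spec k hk (Tk k j) htn
  set j' := (pos k (Tk k j)).1
  set p' := (pos k (Tk k j)).2
  have hjj : j = j' := by
    by_contra hne
    rcases Nat.lt_or_ge j j' with h | h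
    · have := Tk_strict k j j' h (by omega)
      omega
    · have hj'j : j' < j := by omega
      have h4 : Tk k (j' + 1) ≤ Tk k j := by
        rcases Nat.lt_or_ge (j' + 1) j with h5 | h5
        · exact le_of_lt (Tk_strict k (j' + 1) j h5 (by omega))
        · have : j' + 1 = j := by omega
          rw [this]
      rw [Tk_succ] at h4
      omega
  rw [← hjj] at h3
  have hp0 : p' = 0 := by omega
  have : pos k (Tk k j) = (j', p') := rfl
  rw [this, ← hjj, hp0]

noncomputable def val (k j p : ℕ) : ℝ :=
  (j : ℝ) + (p : ℝ) / (2 * (k : ℝ) - (j : ℝ)) +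
    (1 / (8 * (k : ℝ) ^ 4)) * (p : ℝ) * ((p : ℝ) - (2 * (k : ℝ) - (j : ℝ))) / 2

noncomputable def aa (k t : ℕ) : ℝ := val k (pos k t).1 (pos k t).2

noncomputable def G (k j p : ℕ) : ℝ :=
  1 / (2 * (k : ℝ) - (j : ℝ)) +
    (1 / (8 * (k : ℝ) ^ 4)) * (2 * (p : ℝ) + 1 - (2 * (k : ℝ) - (j : ℝ))) / 2

lemma val_zero (k j : ℕ) : val k j 0 = (j : ℝ) := by
  simp [val]

lemma gap_eq (k : ℕ) (hk : 2 ≤ k) {t j p : ℕ} (hj : j < 2 * k) (hp : p < 2 * k - j)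
    (hpos : pos k t = (j, p)) : aa k (t + 1) - aa k t = G k j p := by
  have hjR : (j : ℝ) + 1 ≤ 2 * (k : ℝ) := by exact_mod_cast (by omega : j + 1 ≤ 2 * k)
  have hkR : (2 : ℝ) ≤ (k : ℝ) := by exact_mod_cast hk
  have hM : (2 * (k : ℝ) - (j : ℝ)) ≠ 0 := by linarith
  have hK : ((k : ℝ)) ≠ 0 := by linarith
  have hsucc : pos k (t + 1) =
      if p + 1 < 2 * k - j then (j, p + 1) else (j + 1, 0) := by
    simp [pos, hpos]
  unfold aa
  rw [hpos, hsucc]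
  by_cases hc : p + 1 < 2 * k - j
  · rw [if_pos hc]
    dsimp only
    simp only [val, G]
    push_cast
    field_simp
    ring
  · rw [if_neg hc]
    dsimp only
    have hpe : p + 1 + j = 2 * k := by omega
    have hpr : (p : ℝ) = 2 * (k : ℝ) - (j : ℝ) - 1 := by
      have h : ((p : ℝ) + 1 + (j : ℝ)) = 2 * (k : ℝ) := by exact_mod_cast hpe
      linarith
    simp only [val, G]
    push_cast
    rw [hpr]
    field_simp
    ring

lemma G_pos (k : ℕ) (hk : 2 ≤ k) {j p : ℕ} (hj : j < 2 * k) (hp : p < 2 * k - j) :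
    0 < G k j p := by
  have hkR : (2 : ℝ) ≤ (k : ℝ) := by exact_mod_cast hk
  have hjR : (j : ℝ) + 1 ≤ 2 * (k : ℝ) := by exact_mod_cast (by omega : j + 1 ≤ 2 * k)
  have hp0 : (0 : ℝ) ≤ (p : ℝ) := Nat.cast_nonneg p
  have hj0 : (0 : ℝ) ≤ (j : ℝ) := Nat.cast_nonneg j
  have hK0 : (0 : ℝ) < (k : ℝ) := by linarith
  have hM : (2 * (k : ℝ) - (j : ℝ)) ≠ 0 := by linarith
  have hM0 : (0 : ℝ) < 2 * (k : ℝ) - (j : ℝ) := by linarith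
  have hK : ((k : ℝ)) ≠ 0 := by linarith
  have key : G k j p =
      (16 * (k : ℝ) ^ 4 + (2 * (k : ℝ) - (j : ℝ)) * (2 * (p : ℝ) + 1 - (2 * (k : ℝ) - (j : ℝ))))
        / (16 * (k : ℝ) ^ 4 * (2 * (k : ℝ) - (j : ℝ))) := by
    simp only [G]
    field_simp
    ring
  rw [key]
  apply div_pos
  · have h1 : (2 * (k : ℝ) - (j : ℝ)) ^ 2 ≤ 4 * (k : ℝ) ^ 2 := by nlinarith
    have h2 : 4 * (k : ℝ) ^ 2 ≤ (k : ℝ) ^ 4 := by nlinarith [sq_nonneg ((k:ℝ)^2 - 4), sq_nonneg (k:ℝ)]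
    nlinarith [mul_nonneg hM0.le hp0]
  · positivity

lemma G_step (k : ℕ) (hk : 2 ≤ k) (j p : ℕ) : G k j p < G k j (p + 1) := by
  have hK0 : (0 : ℝ) < (k : ℝ) := by exact_mod_cast (by omega : 0 < k)
  have key : G k j (p + 1) - G k j p = 1 / (8 * (k : ℝ) ^ 4) := by
    simp only [G]
    push_cast
    ring
  have hc : (0 : ℝ) < 1 / (8 * (k : ℝ) ^ 4) := by positivity
  linarith

lemma G_boundary (k : ℕ) (hk : 2 ≤ k) {j p : ℕ} (hj : j + 1 < 2 * k)
    (hpe : p + 1 + j = 2 * k) : G k j p < G k (j + 1) 0 := by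
  have hkR : (2 : ℝ) ≤ (k : ℝ) := by exact_mod_cast hk
  have hjR : (j : ℝ) + 2 ≤ 2 * (k : ℝ) := by exact_mod_cast (by omega : j + 2 ≤ 2 * k)
  have hj0 : (0 : ℝ) ≤ (j : ℝ) := Nat.cast_nonneg j
  have hK0 : (0 : ℝ) < (k : ℝ) := by linarith
  have hpr : (p : ℝ) = 2 * (k : ℝ) - (j : ℝ) - 1 := by
    have h : ((p : ℝ) + 1 + (j : ℝ)) = 2 * (k : ℝ) := by exact_mod_cast hpe
    linarith
  have hM0 : (0 : ℝ) < 2 * (k : ℝ) - (j : ℝ) := by linarith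
  have hM10 : (0 : ℝ) < 2 * (k : ℝ) - (j : ℝ) - 1 := by linarith
  have hM : (2 * (k : ℝ) - (j : ℝ)) ≠ 0 := by linarith
  have hM1 : (2 * (k : ℝ) - ((j : ℝ) + 1)) ≠ 0 := by linarith
  have hK : ((k : ℝ)) ≠ 0 := by linarith
  set M : ℝ := 2 * (k : ℝ) - (j : ℝ) with hMdef
  have key : G k (j + 1) 0 - G k j p =
      (16 * (k : ℝ) ^ 4 - M * (M - 1) * (2 * M - 3))
        / (16 * (k : ℝ) ^ 4 * M * (M - 1)) := by
    simp only [G]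
    push_cast
    rw [hpr]
    rw [show 2 * (k : ℝ) - ((j : ℝ) + 1) = M - 1 by rw [hMdef]; ring]
    rw [← hMdef]
    have hM1' : M - 1 ≠ 0 := by rw [hMdef]; intro h; apply hM1; linarith [h]
    field_simp
    ring
  have hMK : M ≤ 2 * (k : ℝ) := by rw [hMdef]; linarith
  have hM2 : (2 : ℝ) ≤ M := by rw [hMdef]; linarith
  have hnum : 0 < 16 * (k : ℝ) ^ 4 - M * (M - 1) * (2 * M - 3) := by
    have h1 : M * (M - 1) ≤ 4 * (k : ℝ) ^ 2 := by nlinarith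
    have h2 : 2 * M - 3 ≤ 4 * (k : ℝ) := by linarith
    have h3 : M * (M - 1) * (2 * M - 3) ≤ 4 * (k : ℝ) ^ 2 * (4 * (k : ℝ)) := by
      apply mul_le_mul h1 h2 (by linarith) (by positivity)
    have h4 : 16 * (k : ℝ) ^ 3 ≤ 8 * (k : ℝ) ^ 4 := by nlinarith [pow_pos hK0 3]
    nlinarith [pow_pos hK0 4]
  have hden : 0 < 16 * (k : ℝ) ^ 4 * M * (M - 1) := by
    have : (0:ℝ) < M - 1 := by linarith
    positivity
  have := div_pos hnum hden
  linarith [key ▸ this]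


lemma aa_step (k : ℕ) (hk : 2 ≤ k) {t : ℕ} (ht : t < Tk k (2 * k)) :
    aa k t < aa k (t + 1) := by
  obtain ⟨h1, h2, _⟩ := pos_spec k (by omega) t ht
  have hg := gap_eq k hk h1 h2 rfl
  have := G_pos k hk h1 h2
  linarith

lemma aa_mono (k : ℕ) (hk : 2 ≤ k) :
    ∀ t2, t2 < Tk k (2 * k) → ∀ t1, t1 < t2 → aa k t1 < aa k t2 := by
  intro t2
  induction t2 with
  | zero => omega
  | succ t ih =>
    intro ht t1 h1
    have hstep : aa k t < aa k (t + 1) := aa_step k hk (by omega)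
    rcases Nat.lt_succ_iff_lt_or_eq.mp h1 with h | h
    · exact (ih (by omega) t1 h).trans hstep
    · subst h; exact hstep

theorem main : ∃ C : ℝ, 0 < C ∧ ∀ m : ℕ, ∃ A : Finset ℝ, A.card > m ∧ IsConvexFinset A ∧
    ∃ X : Finset ℝ, (X.card : ℝ) ≥ C * Real.sqrt A.card ∧
      ∀ x ∈ X, (((A ×ˢ A).filter (fun p => p.1 - p.2 = x)).card : ℝ) ≥
        C * Real.sqrt A.card := by
  refine ⟨1/2, by norm_num, fun m => ?_⟩
  set k := m + 2 with hkdef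
  have hk : 2 ≤ k := by omega
  set n := Tk k (2 * k) with hndef
  have hn : n = 2 * (k * k) + k := Tk_total k
  set A : Finset ℝ := (Finset.range n).image (aa k) with hAdef
  -- injectivity and cardinality
  have hinj : Set.InjOn (aa k) (Finset.range n : Set ℕ) := by
    intro t1 h1 t2 h2 he
    simp only [Finset.coe_range, Set.mem_Iio] at h1 h2
    by_contra hne
    rcases Nat.lt_or_ge t1 t2 with h | h
    · exact absurd he (ne_of_lt (aa_mono k hk t2 h2 t1 h))
    · have h' : t2 < t1 := by omega
      exact absurd he.symm (ne_of_lt (aa_mono k hk t1 h1 t2 h'))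
  have hcard : A.card = n := by
    rw [hAdef, Finset.card_image_of_injOn hinj, Finset.card_range]
  have hcm : A.card > m := by omega
  -- membership of small integers
  have hmem : ∀ j : ℕ, j < 2 * k → ((j : ℕ) : ℝ) ∈ A := by
    intro j hj
    rw [hAdef, Finset.mem_image]
    refine ⟨Tk k j, Finset.mem_range.mpr ?_, ?_⟩
    · exact Tk_strict k j (2 * k) hj le_rfl
    · rw [aa, pos_Tk k (by omega) hj]
      exact val_zero k j
  -- convexity
  have hconv : IsConvexFinset A := by
    refine ⟨aa k, ?_, ?_, ?_⟩
    · intro i hi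
      rw [hcard] at hi
      exact aa_step k hk (by omega)
    · rw [hcard]
    · intro i hi
      rw [hcard] at hi
      obtain ⟨h1, h2, _⟩ := pos_spec k (by omega) i (by omega)
      obtain ⟨h1', h2', _⟩ := pos_spec k (by omega) (i + 1) (by omega)
      set j := (pos k i).1 with hj
      set p := (pos k i).2 with hp
      have hgi : aa k (i + 1) - aa k i = G k j p := gap_eq k hk h1 h2 rfl
      have hsucc : pos k (i + 1) =
          if p + 1 < 2 * k - j then (j, p + 1) else (j + 1, 0) := by
        simp [pos, ← hj, ← hp]
      by_cases hc : p + 1 < 2 * k - j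
      · rw [hsucc, if_pos hc] at h1' h2'
        have hgi1 : aa k (i + 2) - aa k (i + 1) = G k j (p + 1) := by
          exact gap_eq k hk (by simpa using h1') (by simpa using h2') (by rw [hsucc, if_pos hc])
        rw [hgi, hgi1]
        exact G_step k hk j p
      · rw [hsucc, if_neg hc] at h1' h2'
        have hj1 : j + 1 < 2 * k := by simpa using h1'
        have hgi1 : aa k (i + 2) - aa k (i + 1) = G k (j + 1) 0 := by
          exact gap_eq k hk (by simpa using h1') (by simpa using h2') (by rw [hsucc, if_neg hc])
        rw [hgi, hgi1]
        exact G_boundary k hk hj1 (by omega)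
  -- the set of popular differences
  set X : Finset ℝ := (Finset.range k).image (fun s : ℕ => ((s : ℝ) + 1)) with hXdef
  have hXcard : X.card = k := by
    rw [hXdef, Finset.card_image_of_injOn, Finset.card_range]
    intro a _ b _ h
    have h' : (a : ℝ) + 1 = (b : ℝ) + 1 := h
    have : (a : ℝ) = (b : ℝ) := by linarith
    exact_mod_cast this
  have hsqrt : Real.sqrt A.card ≤ 2 * (k : ℝ) := by
    have hle : ((A.card : ℕ) : ℝ) ≤ (2 * (k : ℝ)) ^ 2 := by
      rw [hcard, hn]
      push_cast
      nlinarith [Nat.cast_nonneg (α := ℝ) k, (by exact_mod_cast hk : (2:ℝ) ≤ (k:ℝ)), mul_le_mul_of_nonneg_left (by exact_mod_cast hk : (2:ℝ) ≤ (k:ℝ)) (Nat.cast_nonneg (α := ℝ) k)]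
    calc Real.sqrt A.card ≤ Real.sqrt ((2 * (k : ℝ)) ^ 2) := Real.sqrt_le_sqrt hle
      _ = 2 * (k : ℝ) := Real.sqrt_sq (by positivity)
  refine ⟨A, hcm, hconv, X, ?_, ?_⟩
  · rw [hXcard]
    linarith
  · intro x hx
    rw [hXdef, Finset.mem_image] at hx
    obtain ⟨s, hs, hxs⟩ := hx
    rw [Finset.mem_range] at hs
    have hcount : k ≤ ((A ×ˢ A).filter (fun p => p.1 - p.2 = x)).card := by
      have := Finset.card_le_card_of_injOn
        (f := fun j : ℕ => ((((j + s + 1 : ℕ)) : ℝ), ((j : ℕ) : ℝ)))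
        (s := Finset.range k)
        (t := (A ×ˢ A).filter (fun p => p.1 - p.2 = x)) ?_ ?_
      · simpa using this
      · intro j hj
        rw [Finset.coe_range, Set.mem_Iio] at hj
        rw [Finset.mem_coe, Finset.mem_filter, Finset.mem_product]
        refine ⟨⟨hmem _ (by omega), hmem _ (by omega)⟩, ?_⟩
        rw [← hxs]
        push_cast
        ring
      · intro j1 _ j2 _ h
        have := congrArg Prod.snd h
        simpa using Nat.cast_injective this
    have : ((k : ℕ) : ℝ) ≤ (((A ×ˢ A).filter (fun p => p.1 - p.2 = x)).card : ℝ) := by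
      exact_mod_cast hcount
    linarith

end MRD

/-- There are arbitrarily large strictly convex sets A such that for ≥ C√|A| values
of x the equation a₁ - a₂ = x has ≥ C√|A| solutions in A × A. -/
theorem many_repeated_differences :
    ∃ C : ℝ, 0 < C ∧ ∀ m : ℕ, ∃ A : Finset ℝ, A.card > m ∧ IsConvexFinset A ∧
      ∃ X : Finset ℝ, (X.card : ℝ) ≥ C * Real.sqrt A.card ∧
        ∀ x ∈ X, (((A ×ˢ A).filter (fun p => p.1 - p.2 = x)).card : ℝ) ≥
          C * Real.sqrt A.card := by
  exact MRD.main
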